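/- arXiv:2505.16115 — 2 statements merged into one kernel-verified Lean document; each statement's English description precedes it below -/
import Mathlib

section
/- Let z_1 < z_2 < ... < z_{n+1} be distinct real numbers and σ a uniformly random permutation of {1,...,n+1}. For α ∈ (0,1), let q̂ be the ⌈(n+1)(1−α)⌉-th smallest value among z_{σ(1)}, ..., z_{σ(n)} (taken as +∞ if ⌈(n+1)(1−α)⌉ > n). Then 1 − α ≤ Pr[z_{σ(n+1)} ≤ q̂] ≤ 1 − α + 1/(n+1). -/
open scoped Classical

lemma sort_image_strictMono {α β : Type*} [LinearOrder α] [LinearOrder β]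
    {f : α → β} (hf : StrictMono f) (s : Finset α) :
    Finset.sort (s.image f) (· ≤ ·) = (Finset.sort s (· ≤ ·)).map f := by
  refine (fun h1 h2 => List.Perm.eq_of_pairwise' (r := (· ≤ ·)) (Finset.pairwise_sort _ _) h2 h1) ?_ ?_
  · apply List.perm_of_nodup_nodup_toFinset_eq (Finset.sort_nodup _ _)
    · exact (Finset.sort_nodup _ _).map hf.injective
    · ext x; simp
  · exact List.Pairwise.map f (fun a b h => hf.monotone h) (Finset.pairwise_sort s _)

lemma card_fin_lt (n k : ℕ) (hk : k ≤ n + 1) :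
    (Finset.univ.filter (fun q : Fin (n + 1) => (q : ℕ) < k)).card = k := by
  have : (Finset.univ.filter (fun q : Fin (n + 1) => (q : ℕ) < k)).card
      = (Finset.range k).card := by
    refine Finset.card_nbij' (fun q => (q : ℕ))
      (fun m => (⟨m % (n+1), Nat.mod_lt _ (Nat.succ_pos n)⟩ : Fin (n+1))) ?_ ?_ ?_ ?_
    · intro a ha; simp at ha ⊢; exact ha
    · intro a ha; simp at ha ⊢
      have : a % (n+1) = a := Nat.mod_eq_of_lt (by omega)
      omega
    · intro a _; simp [Nat.mod_eq_of_lt a.isLt]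
    · intro a ha; simp at ha ⊢
      omega
  rw [this, Finset.card_range]

lemma card_perm_lt (n k : ℕ) (hk : k ≤ n + 1) :
    (Finset.univ.filter (fun σ : Equiv.Perm (Fin (n + 1)) =>
      ((σ (Fin.last n)) : ℕ) < k)).card = k * n.factorial := by
  have step1 : (Finset.univ.filter (fun σ : Equiv.Perm (Fin (n + 1)) =>
      ((σ (Fin.last n)) : ℕ) < k)).card
      = (Finset.univ.filter (fun σ : Equiv.Perm (Fin (n + 1)) =>
      ((σ 0) : ℕ) < k)).card := by
    apply Finset.card_equiv (Equiv.mulRight (Equiv.swap 0 (Fin.last n)))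
    intro σ
    simp only [Finset.mem_filter, Finset.mem_univ, true_and, Equiv.coe_mulRight]
    rw [Equiv.Perm.mul_apply, Equiv.swap_apply_left]
  rw [step1]
  have h2 : (Finset.univ.filter (fun σ : Equiv.Perm (Fin (n + 1)) =>
      ((σ 0) : ℕ) < k)).card = Fintype.card {σ : Equiv.Perm (Fin (n+1)) // ((σ 0) : ℕ) < k} :=
    (Fintype.card_subtype _).symm
  rw [h2]
  have key : ∀ σ : Equiv.Perm (Fin (n+1)), σ 0 = (Equiv.Perm.decomposeFin σ).1 := by
    intro σ
    conv_lhs => rw [← Equiv.Perm.decomposeFin.symm_apply_apply σ]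
    obtain ⟨p, e⟩ := Equiv.Perm.decomposeFin σ
    exact Equiv.Perm.decomposeFin_symm_apply_zero p e
  have e1 : {σ : Equiv.Perm (Fin (n+1)) // ((σ 0) : ℕ) < k}
      ≃ {q : Fin (n+1) // (q : ℕ) < k} × Equiv.Perm (Fin n) :=
    (Equiv.subtypeEquiv Equiv.Perm.decomposeFin (fun σ => by rw [key σ])).trans
      Equiv.prodSubtypeFstEquivSubtypeProd
  rw [Fintype.card_congr e1, Fintype.card_prod, Fintype.card_perm, Fintype.card_fin,
    Fintype.card_subtype, card_fin_lt n k hk]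

lemma event_iff (n : ℕ) (z : Fin (n + 1) → ℝ) (hz : StrictMono z) (k : ℕ) (hk1 : 1 ≤ k)
    (σ : Equiv.Perm (Fin (n + 1))) :
    ((z (σ (Fin.last n)) : EReal) ≤
      (if k ≤ n then
        (((Finset.sort
          (Finset.univ.image (fun i : Fin n => z (σ i.castSucc))) (· ≤ ·)).getD (k - 1) 0 : ℝ) : EReal)
      else (⊤ : EReal))) ↔ ((σ (Fin.last n)) : ℕ) < k := by
  set j := σ (Fin.last n) with hj
  by_cases hkn : k ≤ n
  · rw [if_pos hkn]
    have himg : Finset.univ.image (fun i : Fin n => z (σ i.castSucc))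
        = Finset.univ.image (fun i : Fin n => z (j.succAbove i)) := by
      ext x
      simp only [Finset.mem_image, Finset.mem_univ, true_and]
      constructor
      · rintro ⟨i, rfl⟩
        have hne : σ i.castSucc ≠ j := by
          intro h
          exact (Fin.castSucc_lt_last i).ne (σ.injective (h.trans hj))
        obtain ⟨i', hi'⟩ := Fin.exists_succAbove_eq hne
        exact ⟨i', by rw [hi']⟩
      · rintro ⟨i, rfl⟩
        have hne : σ.symm (j.succAbove i) ≠ Fin.last n := by
          intro h
          have h2 : j.succAbove i = j := by
            conv_rhs => rw [hj, ← h]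
            rw [Equiv.apply_symm_apply]
          exact Fin.succAbove_ne j i h2
        obtain ⟨i', hi'⟩ : ∃ i', i'.castSucc = σ.symm (j.succAbove i) :=
          ⟨(σ.symm (j.succAbove i)).castPred hne, Fin.castSucc_castPred _ _⟩
        exact ⟨i', by rw [hi', Equiv.apply_symm_apply]⟩
    have hmono : StrictMono (fun i : Fin n => z (j.succAbove i)) :=
      hz.comp (Fin.strictMono_succAbove j)
    rw [himg, sort_image_strictMono hmono, Fin.sort_univ]
    have hlen : k - 1 < (List.map (fun i : Fin n => z (j.succAbove i)) (List.finRange n)).length := by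
      simp; omega
    rw [List.getD_eq_getElem _ _ hlen]
    have hk1n : k - 1 < n := by omega
    have : (List.map (fun i : Fin n => z (j.succAbove i)) (List.finRange n))[k-1]
        = z (j.succAbove ⟨k - 1, hk1n⟩) := by
      simp [List.getElem_finRange]
    rw [this, EReal.coe_le_coe_iff]
    rw [hz.le_iff_le]
    rcases lt_or_ge (Fin.castSucc (⟨k - 1, hk1n⟩ : Fin n)) j with h | h
    · rw [Fin.succAbove_of_castSucc_lt _ _ h]
      have h' : k - 1 < (j : ℕ) := h
      constructor
      · intro hle
        exact absurd hle (not_le.mpr h)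
      · intro hlt; omega
    · rw [Fin.succAbove_of_le_castSucc _ _ h]
      have h' : (j : ℕ) ≤ k - 1 := h
      constructor
      · intro _; omega
      · intro _
        rw [Fin.le_def]
        simp; omega
  · rw [if_neg hkn]
    simp only [le_top, true_iff]
    have := j.isLt
    omega

/-- Split conformal coverage guarantee in the random-permutation model:
with q̂ the ⌈(n+1)(1-α)⌉-th smallest of the first n permuted scores
(+∞ if that rank exceeds n), the probability that the held-out score is at most q̂
lies in [1-α, 1-α+1/(n+1)]. -/
theorem stmt2 (n : ℕ) (z : Fin (n + 1) → ℝ) (hz : StrictMono z)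
    (α : ℝ) (hα : α ∈ Set.Ioo (0 : ℝ) 1) :
    1 - α ≤
      ((Finset.univ.filter (fun σ : Equiv.Perm (Fin (n + 1)) =>
          (z (σ (Fin.last n)) : EReal) ≤
            (if ⌈((n : ℝ) + 1) * (1 - α)⌉₊ ≤ n then
              (((Finset.sort
                (Finset.univ.image (fun i : Fin n => z (σ i.castSucc))) (· ≤ ·)).getD
                  (⌈((n : ℝ) + 1) * (1 - α)⌉₊ - 1) 0 : ℝ) : EReal)
            else (⊤ : EReal)))).card : ℝ)
        / (Fintype.card (Equiv.Perm (Fin (n + 1))) : ℝ) ∧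
    ((Finset.univ.filter (fun σ : Equiv.Perm (Fin (n + 1)) =>
        (z (σ (Fin.last n)) : EReal) ≤
          (if ⌈((n : ℝ) + 1) * (1 - α)⌉₊ ≤ n then
            (((Finset.sort
              (Finset.univ.image (fun i : Fin n => z (σ i.castSucc))) (· ≤ ·)).getD
                (⌈((n : ℝ) + 1) * (1 - α)⌉₊ - 1) 0 : ℝ) : EReal)
          else (⊤ : EReal)))).card : ℝ)
      / (Fintype.card (Equiv.Perm (Fin (n + 1))) : ℝ) ≤ 1 - α + 1 / (n + 1) := by
  obtain ⟨hα0, hα1⟩ := hα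
  set k := ⌈((n : ℝ) + 1) * (1 - α)⌉₊ with hkdef
  have hx0 : (0:ℝ) < ((n : ℝ) + 1) * (1 - α) :=
    mul_pos (by positivity) (by linarith)
  have hk0 : 0 < k := Nat.ceil_pos.mpr hx0
  have hk1 : 1 ≤ k := hk0
  have hk2 : k ≤ n + 1 := by
    rw [hkdef]
    rw [show ((n:ℕ) + 1 : ℕ) = ((n+1 : ℕ)) from rfl]
    apply Nat.ceil_le.mpr
    push_cast
    nlinarith [hα0.le]
  have hfilter : (Finset.univ.filter (fun σ : Equiv.Perm (Fin (n + 1)) =>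
        (z (σ (Fin.last n)) : EReal) ≤
          (if k ≤ n then
            (((Finset.sort
              (Finset.univ.image (fun i : Fin n => z (σ i.castSucc))) (· ≤ ·)).getD
                (k - 1) 0 : ℝ) : EReal)
          else (⊤ : EReal))))
      = Finset.univ.filter (fun σ : Equiv.Perm (Fin (n + 1)) =>
          ((σ (Fin.last n)) : ℕ) < k) :=
    Finset.filter_congr (fun σ _ => event_iff n z hz k hk1 σ)
  rw [hfilter, card_perm_lt n k hk2]
  have hcard : (Fintype.card (Equiv.Perm (Fin (n + 1))) : ℝ) = ((n+1) * n.factorial : ℕ) := by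
    rw [Fintype.card_perm, Fintype.card_fin, Nat.factorial_succ]
  have hfacpos : (0:ℝ) < (n.factorial : ℝ) := by
    exact_mod_cast n.factorial_pos
  have hratio : ((k * n.factorial : ℕ) : ℝ)
      / (Fintype.card (Equiv.Perm (Fin (n + 1))) : ℝ) = (k : ℝ) / ((n:ℝ) + 1) := by
    rw [hcard]
    push_cast
    rw [mul_comm ((n:ℝ) + 1) (n.factorial : ℝ), mul_comm (k:ℝ) (n.factorial : ℝ),
      mul_div_mul_left _ _ (ne_of_gt hfacpos)]
  rw [hratio]
  have hn1 : (0:ℝ) < (n:ℝ) + 1 := by positivity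
  have hle : ((n : ℝ) + 1) * (1 - α) ≤ (k : ℝ) := Nat.le_ceil _
  have hlt : (k : ℝ) < ((n : ℝ) + 1) * (1 - α) + 1 := Nat.ceil_lt_add_one hx0.le
  constructor
  · rw [le_div_iff₀ hn1]
    nlinarith
  · rw [div_le_iff₀ hn1]
    have : (1 - α + 1 / ((n:ℝ) + 1)) * ((n:ℝ) + 1) = ((n : ℝ) + 1) * (1 - α) + 1 := by
      field_simp
    rw [this]
    linarith
end

section
/- Exchangeability is preserved under filtering by a symmetric measurable predicate: if (Z_1, ..., Z_{n+1}) is modeled by a uniformly random permutation of fixed distinct values z_1, ..., z_{n+1}, and F is any predicate on values, then conditioned on the multiset {i : F(Z_i)} having size m, the values at those positions form a uniformly random permutation of the m values among z_1, ..., z_{n+1} satisfying F. -/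
open scoped Classical

/-- From two nodup lists with the same underlying multiset, build a permutation
sending the k-th entry of `B` to the k-th entry of `A`, fixing everything
outside the lists. -/
lemma exists_perm_of_lists {α : Type*} [Fintype α] [DecidableEq α] (A B : List α)
    (hA : A.Nodup) (hAB : (A : Multiset α) = (B : Multiset α)) :
    ∃ ρ : Equiv.Perm α,
      (∀ (k : ℕ) (hkA : k < A.length) (hkB : k < B.length),
        ρ (B.get ⟨k, hkB⟩) = A.get ⟨k, hkA⟩) ∧ (∀ x ∉ A, ρ x = x) := by
  have hperm : A.Perm B := Multiset.coe_eq_coe.mp hAB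
  have hB : B.Nodup := hperm.nodup hA
  have hlen : A.length = B.length := hperm.length_eq
  set f : α → α := fun x =>
    if h : x ∈ B then
      A.get ⟨B.idxOf x, by rw [hlen]; exact List.idxOf_lt_length_iff.2 h⟩
    else x with hf
  have hfpos : ∀ x (h : x ∈ B), f x =
      A.get ⟨B.idxOf x, by rw [hlen]; exact List.idxOf_lt_length_iff.2 h⟩ := by
    intro x h; rw [hf]; simp only [dif_pos h]
  have hfneg : ∀ x, x ∉ B → f x = x := by
    intro x h; rw [hf]; simp only [dif_neg h]
  have hfmem : ∀ x (h : x ∈ B), f x ∈ A := by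
    intro x h; rw [hfpos x h]; exact A.get_mem _
  have hinj : Function.Injective f := by
    intro x y hxy
    by_cases hx : x ∈ B <;> by_cases hy : y ∈ B
    · rw [hfpos x hx, hfpos y hy] at hxy
      have h1 := hA.get_inj_iff.1 hxy
      have h2 : (B.idxOf x : ℕ) = B.idxOf y := congrArg Fin.val h1
      have hx' : B.get ⟨B.idxOf x, List.idxOf_lt_length_iff.2 hx⟩ = x :=
        List.idxOf_get _
      have hy' : B.get ⟨B.idxOf y, List.idxOf_lt_length_iff.2 hy⟩ = y :=
        List.idxOf_get _
      rw [← hx', ← hy']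
      congr 1
      exact Fin.ext h2
    · exfalso
      have h1 : f x ∈ A := hfmem x hx
      rw [hxy, hfneg y hy] at h1
      exact hy (hperm.mem_iff.mp h1)
    · exfalso
      have h1 : f y ∈ A := hfmem y hy
      rw [← hxy, hfneg x hx] at h1
      exact hx (hperm.mem_iff.mp h1)
    · rwa [hfneg x hx, hfneg y hy] at hxy
  refine ⟨Equiv.ofBijective f (Finite.injective_iff_bijective.mp hinj), ?_, ?_⟩
  · intro k hkA hkB
    show f (B.get ⟨k, hkB⟩) = _
    have hmem : B.get ⟨k, hkB⟩ ∈ B := B.get_mem _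
    rw [hfpos _ hmem]
    congr 1
    exact Fin.ext (List.get_idxOf hB ⟨k, hkB⟩)
  · intro x hxA
    show f x = x
    exact hfneg x fun h => hxA (hperm.mem_iff.mpr h)

/-- A permutation fixing the complement of `S` pointwise preserves membership in `S`. -/
lemma fix_mem_iff {α : Type*} {S : Finset α} {ρ : Equiv.Perm α}
    (h : ∀ x ∉ S, ρ x = x) (x : α) : ρ x ∈ S ↔ x ∈ S := by
  constructor
  · intro hx
    by_contra hx'
    rw [h x hx'] at hx
    exact hx' hx
  · intro hx
    by_contra hx'
    have h2 := h _ hx'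
    have h3 : ρ x = x := ρ.injective h2
    rw [h3] at hx'
    exact hx' hx

lemma fix_inv {α : Type*} {S : Finset α} {ρ : Equiv.Perm α}
    (h : ∀ x ∉ S, ρ x = x) : ∀ x ∉ S, ρ⁻¹ x = x := by
  intro x hx
  have h1 := h x hx
  calc ρ⁻¹ x = ρ⁻¹ (ρ x) := by rw [h1]
  _ = x := by simp

lemma map_eq_map_forall {α β : Type*} {f g : α → β} :
    ∀ {l : List α}, l.map f = l.map g → ∀ a ∈ l, f a = g a := by
  intro l
  induction l with
  | nil => intro _ a ha; simp at ha
  | cons b t ih =>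
      intro h a ha
      simp only [List.map_cons, List.cons.injEq] at h
      rcases List.mem_cons.mp ha with rfl | ha'
      · exact h.1
      · exact ih h.2 a ha'

theorem List.get_map {α β : Type*} (f : α → β) {l : List α} {n : Fin (l.map f).length} :
    (l.map f).get n = f (l.get ⟨n, by simpa using n.2⟩) := by
  simp

theorem stmt14_count (n : ℕ) (z : Fin (n + 1) → ℝ) (hz : Function.Injective z)
    (F : ℝ → Prop) (ℓ : List ℝ)
    (hℓ : (↑ℓ : Multiset ℝ) =
      ((Finset.univ.filter (fun j : Fin (n + 1) => F (z j))).val).map z) :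
    (Finset.univ.filter (fun σ : Equiv.Perm (Fin (n + 1)) =>
        ((Finset.sort
          (Finset.univ.filter (fun i : Fin (n + 1) => F (z (σ i)))) (· ≤ ·)).map
            (fun i => z (σ i))) = ℓ)).card *
      ((Finset.univ.filter (fun j : Fin (n + 1) => F (z j))).card.factorial)
      = Fintype.card (Equiv.Perm (Fin (n + 1))) := by
  set S := Finset.univ.filter (fun j : Fin (n + 1) => F (z j)) with hS
  have hmemS : ∀ x, x ∈ S ↔ F (z x) := by
    intro x; rw [hS]; simp
  -- the image of the filtered position set under σ is S
  have hTmap : ∀ σ : Equiv.Perm (Fin (n + 1)),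
      (Finset.univ.filter (fun i : Fin (n + 1) => F (z (σ i)))).map
        ⟨σ, σ.injective⟩ = S := by
    intro σ
    ext x
    simp only [Finset.mem_map, Finset.mem_filter, Finset.mem_univ, true_and,
      Function.Embedding.coeFn_mk, hmemS]
    constructor
    · rintro ⟨i, hi, rfl⟩; exact hi
    · intro hx
      refine ⟨σ.symm x, ?_, σ.apply_symm_apply x⟩
      rwa [σ.apply_symm_apply]
  have hTval : ∀ σ : Equiv.Perm (Fin (n + 1)),
      (Finset.univ.filter (fun i : Fin (n + 1) => F (z (σ i)))).val.map σ
        = S.val := by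
    intro σ
    have h1 := congrArg Finset.val (hTmap σ)
    simpa using h1
  have hTcard : ∀ σ : Equiv.Perm (Fin (n + 1)),
      (Finset.univ.filter (fun i : Fin (n + 1) => F (z (σ i)))).card = S.card := by
    intro σ
    conv_rhs => rw [← hTmap σ]
    rw [Finset.card_map]
  have hlenℓ : ℓ.length = S.card := by
    have h1 := congrArg Multiset.card hℓ
    simpa using h1
  -- card of the set of permutations fixing S-complement pointwise
  have hfixcard : (Finset.univ.filter
        (fun ρ : Equiv.Perm (Fin (n + 1)) => ∀ i ∉ S, ρ i = i)).card
      = S.card.factorial := by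
    rw [← Fintype.card_subtype]
    have e : {ρ : Equiv.Perm (Fin (n + 1)) // ∀ i ∉ S, ρ i = i}
        ≃ Equiv.Perm {x : Fin (n + 1) // x ∈ S} :=
      (Equiv.Perm.subtypeEquivSubtypePerm (fun i => i ∈ S)).symm
    rw [Fintype.card_congr e, Fintype.card_perm, Fintype.card_coe]
  -- the key bijection
  have hprod : ((Finset.univ.filter (fun σ : Equiv.Perm (Fin (n + 1)) =>
        ((Finset.sort
          (Finset.univ.filter (fun i : Fin (n + 1) => F (z (σ i)))) (· ≤ ·)).map
            (fun i => z (σ i))) = ℓ)) ×ˢ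
      (Finset.univ.filter
        (fun ρ : Equiv.Perm (Fin (n + 1)) => ∀ i ∉ S, ρ i = i))).card
      = Fintype.card (Equiv.Perm (Fin (n + 1))) := by
    rw [← Finset.card_univ]
    apply Finset.card_bij (fun p _ => p.2 * p.1)
    · intro a _; exact Finset.mem_univ _
    · -- injectivity
      rintro ⟨σ₁, ρ₁⟩ h₁ ⟨σ₂, ρ₂⟩ h₂ heq
      simp only [Finset.mem_product, Finset.mem_filter, Finset.mem_univ,
        true_and] at h₁ h₂
      obtain ⟨hc₁, hf₁⟩ := h₁
      obtain ⟨hc₂, hf₂⟩ := h₂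
      simp only at heq
      -- heq : ρ₁ * σ₁ = ρ₂ * σ₂
      have hρ : ∀ x ∉ S, (ρ₂⁻¹ * ρ₁) x = x := by
        intro x hx
        have h1 := fix_inv hf₂ x hx
        simp only [Equiv.Perm.mul_apply, hf₁ x hx, h1]
      have hσmul : (ρ₂⁻¹ * ρ₁) * σ₁ = σ₂ := by
        rw [mul_assoc, heq, inv_mul_cancel_left]
      have hσ21 : ∀ i, σ₂ i = (ρ₂⁻¹ * ρ₁) (σ₁ i) := by
        intro i; rw [← hσmul]; rfl
      have hT21 : (Finset.univ.filter (fun i : Fin (n + 1) => F (z (σ₂ i))))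
          = Finset.univ.filter (fun i : Fin (n + 1) => F (z (σ₁ i))) := by
        ext i
        simp only [Finset.mem_filter, Finset.mem_univ, true_and]
        rw [← hmemS (σ₂ i), ← hmemS (σ₁ i), hσ21 i]
        exact fix_mem_iff hρ _
      have hσeq : σ₁ = σ₂ := by
        apply Equiv.ext
        intro i
        by_cases hi : F (z (σ₁ i))
        · rw [hT21] at hc₂
          have hmm : i ∈ Finset.sort
              (Finset.univ.filter (fun i : Fin (n + 1) => F (z (σ₁ i)))) (· ≤ ·) := by
            rw [Finset.mem_sort]
            simp [hi]
          have h3 := map_eq_map_forall (hc₂.trans hc₁.symm) i hmm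
          exact (hz h3).symm
        · have hnot : σ₁ i ∉ S := by rw [hmemS]; exact hi
          rw [hσ21 i, hρ _ hnot]
      have hρeq : ρ₁ = ρ₂ := by
        have h4 : ρ₁ * σ₁ = ρ₂ * σ₁ := by rw [heq, hσeq]
        exact mul_right_cancel h4
      simp [hσeq, hρeq]
    · -- surjectivity
      intro τ _
      set T := Finset.univ.filter (fun i : Fin (n + 1) => F (z (τ i))) with hT
      set A := (Finset.sort T (· ≤ ·)).map τ with hA
      set B := ℓ.map (Function.invFun z) with hB
      have hwz : ∀ j, Function.invFun z (z j) = j :=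
        fun j => Function.leftInverse_invFun hz j
      have hAval : (↑A : Multiset (Fin (n + 1))) = S.val := by
        rw [hA, ← Multiset.map_coe, Finset.sort_eq, hT]
        exact hTval τ
      have hBval : (↑B : Multiset (Fin (n + 1))) = S.val := by
        rw [hB, ← Multiset.map_coe, hℓ, Multiset.map_map]
        rw [show (Function.invFun z ∘ z) = id from funext hwz, Multiset.map_id]
      have hAnodup : A.Nodup := by
        have h1 : (↑A : Multiset (Fin (n + 1))).Nodup := by
          rw [hAval]; exact S.nodup
        exact h1
      obtain ⟨ρ, hρget, hρfix⟩ :=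
        exists_perm_of_lists A B hAnodup (hAval.trans hBval.symm)
      have hρS : ∀ x ∉ S, ρ x = x := by
        intro x hx
        apply hρfix
        intro hxA
        apply hx
        have h1 : x ∈ (↑A : Multiset (Fin (n + 1))) := hxA
        rw [hAval] at h1
        exact h1
      have hρinv : ∀ x ∉ S, ρ⁻¹ x = x := fix_inv hρS
      have hTcardS : T.card = S.card := by rw [hT]; exact hTcard τ
      have hAlen : A.length = S.card := by
        rw [hA]; simp [Finset.length_sort, hTcardS]
      have hBlen : B.length = S.card := by
        rw [hB]; simp [hlenℓ]
      refine ⟨(ρ⁻¹ * τ, ρ), ?_, ?_⟩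
      · simp only [Finset.mem_product, Finset.mem_filter, Finset.mem_univ,
          true_and]
        refine ⟨?_, hρS⟩
        have hTeq : (Finset.univ.filter
            (fun i : Fin (n + 1) => F (z ((ρ⁻¹ * τ) i)))) = T := by
          rw [hT]
          ext i
          rw [Finset.mem_filter, Finset.mem_filter]
          simp only [Finset.mem_filter, Finset.mem_univ, true_and,
            Equiv.Perm.mul_apply]
          rw [← hmemS (ρ⁻¹ (τ i)), ← hmemS (τ i)]
          exact fix_mem_iff hρinv (τ i)
        rw [hTeq]
        apply List.ext_get
        · simp [Finset.length_sort, hTcardS, hlenℓ]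
        · intro k h1 h2
          simp only [List.get_map]
          have hks : k < (Finset.sort T (· ≤ ·)).length := by
            simpa using h1
          have hkA : k < A.length := by
            rw [hA]; simpa using hks
          have hkB : k < B.length := by
            rw [hB]; simpa using h2
          have h3 : ρ (B.get ⟨k, hkB⟩) = A.get ⟨k, hkA⟩ := hρget k hkA hkB
          have h4 : ρ⁻¹ (A.get ⟨k, hkA⟩) = B.get ⟨k, hkB⟩ := by
            rw [← h3]; simp
          have h5 : A.get ⟨k, hkA⟩ = τ ((Finset.sort T (· ≤ ·)).get ⟨k, hks⟩) := by
            simp [hA, List.get_map]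
          have h6 : z (B.get ⟨k, hkB⟩) = ℓ.get ⟨k, h2⟩ := by
            have hmem : ℓ.get ⟨k, h2⟩ ∈ ℓ := ℓ.get_mem _
            have hmem' : ℓ.get ⟨k, h2⟩ ∈ (↑ℓ : Multiset ℝ) := hmem
            rw [hℓ] at hmem'
            obtain ⟨j, _, hj⟩ := Multiset.mem_map.mp hmem'
            have hBk : B.get ⟨k, hkB⟩ = Function.invFun z (ℓ.get ⟨k, h2⟩) := by
              simp [hB, List.get_map]
            rw [hBk, ← hj, hwz j]
          have h7 : (ρ⁻¹ * τ) ((Finset.sort T (· ≤ ·)).get ⟨k, hks⟩)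
              = B.get ⟨k, hkB⟩ := by
            rw [Equiv.Perm.mul_apply, ← h5, h4]
          -- goal is about get of sort with index proof from h1
          have : ((Finset.sort T (· ≤ ·)).get ⟨k, hks⟩)
              = ((Finset.sort T (· ≤ ·)).get ⟨k, by simpa using h1⟩) := rfl
          rw [show ((Finset.sort T (· ≤ ·)).get ⟨k, by simpa using h1⟩ : Fin (n+1))
              = (Finset.sort T (· ≤ ·)).get ⟨k, hks⟩ from rfl, h7, h6]
      · show ρ * (ρ⁻¹ * τ) = τ
        exact mul_inv_cancel_left ρ τ
  rw [Finset.card_product, hfixcard] at hprod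
  exact hprod

/-- Exchangeability (uniform random permutation of fixed distinct values) is
preserved under filtering by a predicate on values: the list of values at the
filtered positions (taken in increasing position order) is uniformly distributed
over the orderings of the filtered values. Here m is the (deterministic) number
of values satisfying F, and each admissible ordering ℓ of the filtered values is
attained with probability 1/m!. -/
theorem stmt14 (n : ℕ) (z : Fin (n + 1) → ℝ) (hz : Function.Injective z)
    (F : ℝ → Prop) (ℓ : List ℝ)
    (hℓ : (↑ℓ : Multiset ℝ) =
      ((Finset.univ.filter (fun j : Fin (n + 1) => F (z j))).val).map z) :
    ((Finset.univ.filter (fun σ : Equiv.Perm (Fin (n + 1)) =>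
        ((Finset.sort
          (Finset.univ.filter (fun i : Fin (n + 1) => F (z (σ i)))) (· ≤ ·)).map
            (fun i => z (σ i))) = ℓ)).card : ℝ)
      / (Fintype.card (Equiv.Perm (Fin (n + 1))) : ℝ) =
      1 / ((Finset.univ.filter (fun j : Fin (n + 1) => F (z j))).card.factorial : ℝ) := by
  have key := stmt14_count n z hz F ℓ hℓ
  have h1 : (0:ℝ) < ((Finset.univ.filter (fun j : Fin (n + 1) => F (z j))).card.factorial : ℝ) := by
    exact_mod_cast Nat.factorial_pos _
  have h2 : (0:ℝ) < (Fintype.card (Equiv.Perm (Fin (n + 1))) : ℝ) := by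
    exact_mod_cast Fintype.card_pos
  rw [div_eq_div_iff h2.ne' h1.ne', one_mul]
  exact_mod_cast key
end
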